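/- A signed set S = P ⊔ N (P the positive part, N the negative part) is an admissible pinnacle set of the hyperoctahedral group B_n if and only if: |P| + |N| ≤ (n-1)/2, P ⊆ {1,...,n}, N ⊆ -({1,...,n} \ P), and N is an admissible pinnacle set of the totally ordered set -({1,...,n} \ P). -/

import Mathlib

/-- The pinnacle set of a word `w : Fin n → ℤ`: values `w i` (for `0 < i < n-1`)
strictly larger than both neighbors. -/
def PinSet (n : ℕ) (w : Fin n → ℤ) : Set ℤ :=
  {x | ∃ (i : ℕ) (h0 : 0 < i) (h2 : i + 1 < n),
    w ⟨i, by omega⟩ = x ∧ w ⟨i - 1, by omega⟩ < w ⟨i, by omega⟩ ∧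
      w ⟨i + 1, h2⟩ < w ⟨i, by omega⟩}

/-- `w : Fin n → ℤ` is the one-line notation of a signed permutation of rank `n`:
the absolute values of its entries are distinct elements of `{1,...,n}`
(hence a bijection onto `{1,...,n}`). -/
def IsSignedPerm (n : ℕ) (w : Fin n → ℤ) : Prop :=
  (∀ i, 1 ≤ |w i| ∧ |w i| ≤ (n : ℤ)) ∧ Function.Injective fun i => |w i|

/-- `S` is an admissible pinnacle set of the hyperoctahedral group `B_n`. -/
def APSB (n : ℕ) (S : Finset ℤ) : Prop :=
  ∃ w : Fin n → ℤ, IsSignedPerm n w ∧ PinSet n w = ↑S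

/-- `S` is an admissible pinnacle set of the type `D` group `D_n`
(signed permutations with an even number of negative one-line entries). -/
def APSD (n : ℕ) (S : Finset ℤ) : Prop :=
  ∃ w : Fin n → ℤ, IsSignedPerm n w ∧
    Even (Finset.univ.filter fun i => w i < 0).card ∧ PinSet n w = ↑S

/-- `S` is an admissible pinnacle set of the symmetric group `S_n`
(an unsigned permutation is a signed permutation with all entries positive). -/
def APSA (n : ℕ) (S : Finset ℤ) : Prop :=
  ∃ w : Fin n → ℤ, IsSignedPerm n w ∧ (∀ i, 0 < w i) ∧ PinSet n w = ↑S

/-- `T` is an admissible pinnacle set of the totally ordered finite set `X ⊆ ℤ`: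
it is the pinnacle set of some arrangement of the elements of `X`. -/
def APSOn (X : Finset ℤ) (T : Finset ℤ) : Prop :=
  ∃ w : Fin X.card → ℤ, Function.Injective w ∧ (∀ i, w i ∈ X) ∧
    PinSet X.card w = ↑T

namespace Stmt4Aux

def Wext (n : ℕ) (w : Fin n → ℤ) (i : ℕ) : ℤ := if h : i < n then w ⟨i, h⟩ else 0

lemma Wext_lt {n i : ℕ} (w : Fin n → ℤ) (h : i < n) : Wext n w i = w ⟨i, h⟩ := dif_pos h

lemma mem_pinset_iff (n : ℕ) (w : Fin n → ℤ) (x : ℤ) :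
    x ∈ PinSet n w ↔ ∃ i, 0 < i ∧ i + 1 < n ∧ Wext n w i = x ∧
      Wext n w (i-1) < Wext n w i ∧ Wext n w (i+1) < Wext n w i := by
  constructor
  · rintro ⟨i, h0, h2, hv, hl, hr⟩
    refine ⟨i, h0, h2, ?_, ?_, ?_⟩
    · rw [Wext_lt w (show i < n by omega)]; exact hv
    · rw [Wext_lt w (show i - 1 < n by omega), Wext_lt w (show i < n by omega)]; exact hl
    · rw [Wext_lt w h2, Wext_lt w (show i < n by omega)]; exact hr
  · rintro ⟨i, h0, h2, hv, hl, hr⟩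
    rw [Wext_lt w (show i < n by omega)] at hv hl hr
    rw [Wext_lt w (show i - 1 < n by omega)] at hl
    rw [Wext_lt w h2] at hr
    exact ⟨i, h0, h2, hv, hl, hr⟩

open Finset in
lemma count_lemma (m : ℕ) (w : Fin m → ℤ) (hw : Function.Injective w)
    (T X : Finset ℤ) (hT : PinSet m w = ↑T) (x : ℤ)
    (hX : ∀ i : Fin m, w i ≤ x → w i ∈ X) (hx : x ∈ T) :
    2 * (T.filter (· ≤ x)).card < (X.filter (· ≤ x)).card := by
  classical
  set W := Wext m w with hW
  have hWinj : ∀ i j, i < m → j < m → W i = W j → i = j := by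
    intro i j hi hj h
    simp only [hW, Wext_lt w hi, Wext_lt w hj] at h
    simpa using congrArg Fin.val (hw h)
  have hpin : ∀ y, y ∈ T ↔ ∃ i, 0 < i ∧ i + 1 < m ∧ W i = y ∧
      W (i-1) < W i ∧ W (i+1) < W i := by
    intro y
    rw [← mem_pinset_iff, hT]; simp
  set I : Finset ℕ := (Finset.range m).filter
    (fun i => 0 < i ∧ i + 1 < m ∧ W (i-1) < W i ∧ W (i+1) < W i ∧ W i ≤ x) with hI
  have hImem : ∀ i, i ∈ I ↔ 0 < i ∧ i + 1 < m ∧ W (i-1) < W i ∧ W (i+1) < W i ∧ W i ≤ x := by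
    intro i
    simp only [hI, Finset.mem_filter, Finset.mem_range]
    constructor
    · rintro ⟨-, h⟩; exact h
    · rintro ⟨h1, h2, h⟩; exact ⟨by omega, h1, h2, h⟩
  -- no two adjacent elements in I
  have hadj : ∀ i, i ∈ I → i + 1 ∉ I := by
    intro i hi hi1
    rw [hImem] at hi hi1
    obtain ⟨-, -, -, h4, -⟩ := hi
    obtain ⟨-, -, h3, -, -⟩ := hi1
    simp only [Nat.add_sub_cancel] at h3
    exact lt_asymm h4 h3
  -- each element of I has a witness bound
  have hIlt : ∀ i ∈ I, i + 1 < m := fun i hi => ((hImem i).1 hi).2.1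
  -- |T ∩ (≤ x)| = |I|
  have hcardI : I.card = (T.filter (· ≤ x)).card := by
    apply Finset.card_bij (fun i _ => W i)
    · intro i hi
      rw [hImem] at hi
      obtain ⟨h0, h1, h2, h3, h4⟩ := hi
      exact Finset.mem_filter.2 ⟨(hpin (W i)).2 ⟨i, h0, h1, rfl, h2, h3⟩, h4⟩
    · intro i hi j hj h
      have hi' := hIlt i hi
      have hj' := hIlt j hj
      exact hWinj i j (by omega) (by omega) h
    · intro y hy
      rw [Finset.mem_filter] at hy
      obtain ⟨hyT, hyx⟩ := hy
      obtain ⟨i, h0, h1, hv, h2, h3⟩ := (hpin y).1 hyT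
      exact ⟨i, (hImem i).2 ⟨h0, h1, h2, h3, by rw [hv]; exact hyx⟩, hv⟩
  -- I is nonempty
  have hne : I.Nonempty := by
    obtain ⟨i, h0, h1, hv, h2, h3⟩ := (hpin x).1 hx
    exact ⟨i, (hImem i).2 ⟨h0, h1, h2, h3, le_of_eq hv⟩⟩
  set M := I.max' hne with hM
  have hMmem : M ∈ I := I.max'_mem hne
  set B : Finset ℕ := (I ∪ I.image (· - 1)) ∪ {M + 1} with hB
  have hIpos : ∀ i ∈ I, 0 < i := fun i hi => ((hImem i).1 hi).1
  have hd1 : Disjoint I (I.image (· - 1)) := by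
    rw [Finset.disjoint_right]
    intro j hj hjI
    rw [Finset.mem_image] at hj
    obtain ⟨i, hi, hij⟩ := hj
    have h1 := hIpos i hi
    have : i = j + 1 := by omega
    exact hadj j hjI (this ▸ hi)
  have hd2 : Disjoint (I ∪ I.image (· - 1)) {M + 1} := by
    rw [Finset.disjoint_right]
    intro j hj hjI
    rw [Finset.mem_singleton] at hj
    subst hj
    rw [Finset.mem_union] at hjI
    rcases hjI with h | h
    · exact absurd (I.le_max' _ h) (by omega)
    · rw [Finset.mem_image] at h
      obtain ⟨i, hi, hij⟩ := h
      have h1 := hIpos i hi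
      have h2 := I.le_max' _ hi
      omega
  have hcardim : (I.image (· - 1)).card = I.card := by
    apply Finset.card_image_of_injOn
    intro i hi j hj h
    have := hIpos i hi
    have := hIpos j hj
    simp only at h
    omega
  have hcardB : B.card = 2 * I.card + 1 := by
    rw [hB, Finset.card_union_of_disjoint hd2, Finset.card_union_of_disjoint hd1,
      hcardim, Finset.card_singleton]
    ring
  -- all elements of B are < m, and their W-values are ≤ x and in X
  have hBprop : ∀ b ∈ B, b < m ∧ W b ≤ x := by
    intro b hb
    rw [hB, Finset.mem_union, Finset.mem_union] at hb
    rcases hb with (hb | hb) | hb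
    · obtain ⟨h0, h1, h2, h3, h4⟩ := (hImem b).1 hb
      exact ⟨by omega, h4⟩
    · rw [Finset.mem_image] at hb
      obtain ⟨i, hi, hib⟩ := hb
      obtain ⟨h0, h1, h2, h3, h4⟩ := (hImem i).1 hi
      subst hib
      exact ⟨by omega, le_trans (le_of_lt h2) h4⟩
    · rw [Finset.mem_singleton] at hb
      subst hb
      obtain ⟨h0, h1, h2, h3, h4⟩ := (hImem M).1 hMmem
      exact ⟨h1, le_trans (le_of_lt h3) h4⟩
  have hfinal : B.card ≤ (X.filter (· ≤ x)).card := by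
    apply Finset.card_le_card_of_injOn W
    · intro b hb
      obtain ⟨hbm, hbx⟩ := hBprop b hb
      rw [Finset.mem_coe, Finset.mem_filter]
      refine ⟨?_, hbx⟩
      have : W b = w ⟨b, hbm⟩ := by simp only [hW, Wext_lt w hbm]
      rw [this] at hbx ⊢
      exact hX _ hbx
    · intro i hi j hj h
      simp only [Finset.mem_coe] at hi hj
      exact hWinj i j (hBprop i hi).1 (hBprop j hj).1 h
  omega

lemma card_pin_le (m : ℕ) (w : Fin m → ℤ) (hw : Function.Injective w)
    (T : Finset ℤ) (hT : PinSet m w = ↑T) : T.card ≤ (m - 1) / 2 := by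
  classical
  set W := Wext m w with hW
  have hWinj : ∀ i j, i < m → j < m → W i = W j → i = j := by
    intro i j hi hj h
    simp only [hW, Wext_lt w hi, Wext_lt w hj] at h
    simpa using congrArg Fin.val (hw h)
  have hpin : ∀ y, y ∈ T ↔ ∃ i, 0 < i ∧ i + 1 < m ∧ W i = y ∧
      W (i-1) < W i ∧ W (i+1) < W i := by
    intro y
    rw [← mem_pinset_iff, hT]; simp
  set I : Finset ℕ := (Finset.range m).filter
    (fun i => 0 < i ∧ i + 1 < m ∧ W (i-1) < W i ∧ W (i+1) < W i) with hI
  have hImem : ∀ i, i ∈ I ↔ 0 < i ∧ i + 1 < m ∧ W (i-1) < W i ∧ W (i+1) < W i := by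
    intro i
    simp only [hI, Finset.mem_filter, Finset.mem_range]
    constructor
    · rintro ⟨-, h⟩; exact h
    · rintro ⟨h1, h2, h⟩; exact ⟨by omega, h1, h2, h⟩
  have hadj : ∀ i, i ∈ I → i + 1 ∉ I := by
    intro i hi hi1
    rw [hImem] at hi hi1
    obtain ⟨-, -, -, h4⟩ := hi
    obtain ⟨-, -, h3, -⟩ := hi1
    simp only [Nat.add_sub_cancel] at h3
    exact lt_asymm h4 h3
  have hcardI : T.card = I.card := by
    apply Finset.card_bij (fun y hy => Classical.choose ((hpin y).1 hy))
    · intro y hy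
      obtain ⟨h0, h1, h2, h3, h4⟩ := Classical.choose_spec ((hpin y).1 hy)
      exact (hImem _).2 ⟨h0, h1, h3, h4⟩
    · intro y hy z hz h
      obtain ⟨h0, h1, h2, -, -⟩ := Classical.choose_spec ((hpin y).1 hy)
      obtain ⟨g0, g1, g2, -, -⟩ := Classical.choose_spec ((hpin z).1 hz)
      rw [← h2, ← g2, h]
    · intro i hi
      obtain ⟨h0, h1, h2, h3⟩ := (hImem i).1 hi
      have hyT : W i ∈ T := (hpin (W i)).2 ⟨i, h0, h1, rfl, h2, h3⟩
      refine ⟨W i, hyT, ?_⟩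
      obtain ⟨g0, g1, g2, -, -⟩ := Classical.choose_spec ((hpin (W i)).1 hyT)
      exact hWinj _ _ (by omega) (by omega) g2
  rw [hcardI]
  calc I.card ≤ (Finset.range ((m-1)/2)).card := by
        apply Finset.card_le_card_of_injOn (fun i => (i - 1) / 2)
        · intro i hi
          obtain ⟨h0, h1, -, -⟩ := (hImem i).1 hi
          rw [Finset.mem_coe, Finset.mem_range]
          show (i - 1) / 2 < (m - 1) / 2
          omega
        · intro i hi j hj h
          simp only [Finset.mem_coe] at hi hj
          simp only at h
          obtain ⟨hi0, -, -, -⟩ := (hImem i).1 hi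
          obtain ⟨hj0, -, -, -⟩ := (hImem j).1 hj
          rcases Nat.lt_trichotomy i j with hlt | heq | hgt
          · have : j = i + 1 := by omega
            exact absurd (this ▸ hj) (hadj i hi)
          · exact heq
          · have : i = j + 1 := by omega
            exact absurd (this ▸ hi) (hadj j hj)
    _ = (m-1)/2 := Finset.card_range _

lemma sorted_getElem_lt {l : List ℤ} (hl : l.Pairwise (· < ·)) {i j : ℕ}
    (hi : i < l.length) (hj : j < l.length) (hij : i < j) : l[i] < l[j] :=
  List.pairwise_iff_getElem.1 hl i j hi hj hij

lemma filter_card_of_sorted (F : Finset ℤ) (p : ℤ → Prop) [DecidablePred p] (c : ℕ)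
    (hc : c ≤ F.card)
    (hp : ∀ i (hi : i < (F.sort (· ≤ ·)).length), p ((F.sort (· ≤ ·))[i]) ↔ i < c) :
    (F.filter p).card = c := by
  classical
  set l := F.sort (· ≤ ·) with hl
  have hlen : l.length = F.card := Finset.length_sort _
  have h1 : (F.filter p).card = (l.filter (fun z => decide (p z))).length := by
    rw [Finset.card, Finset.filter_val, ← Finset.sort_eq F (· ≤ ·), ← hl,
      Multiset.filter_coe, Multiset.coe_card]
  rw [h1]
  have hsplit : l = l.take c ++ l.drop c := (List.take_append_drop c l).symm
  rw [hsplit, List.filter_append, List.length_append]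
  have hcl : c ≤ l.length := by omega
  have ht : (l.take c).filter (fun z => decide (p z)) = l.take c := by
    apply List.filter_eq_self.2
    intro a ha
    rw [List.mem_iff_getElem] at ha
    obtain ⟨i, hi, rfl⟩ := ha
    rw [List.length_take] at hi
    have hi2 : i < l.length := by omega
    rw [List.getElem_take]
    exact decide_eq_true ((hp i hi2).2 (by omega))
  have hd : (l.drop c).filter (fun z => decide (p z)) = [] := by
    apply List.filter_eq_nil_iff.2
    intro a ha
    rw [List.mem_iff_getElem] at ha
    obtain ⟨i, hi, rfl⟩ := ha
    rw [List.length_drop] at hi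
    rw [List.getElem_drop]
    intro hcon
    have := (hp (c + i) (by omega)).1 (of_decide_eq_true hcon)
    omega
  rw [ht, hd, List.length_take]
  simp
  omega

lemma sort_filter_le_card (F : Finset ℤ) (t : ℕ) (ht : t < F.card) :
    (F.filter (· ≤ (F.sort (· ≤ ·))[t]'(by rw [Finset.length_sort]; exact ht))).card = t + 1 := by
  classical
  have hlt : (F.sort (· ≤ ·)).Pairwise (· < ·) := List.sortedLT_iff_pairwise.1 F.sortedLT_sort
  have hlen : (F.sort (· ≤ ·)).length = F.card := Finset.length_sort _
  apply filter_card_of_sorted F _ (t+1) (by omega)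
  intro i hi
  constructor
  · intro h
    by_contra hcon
    exact absurd (sorted_getElem_lt hlt (by omega) hi (by omega)) (not_lt.2 h)
  · intro h
    rcases Nat.lt_or_ge i t with h' | h'
    · exact le_of_lt (sorted_getElem_lt hlt hi (by omega) h')
    · have : i = t := by omega
      subst this; exact le_refl _

lemma sort_filter_lt_card (F : Finset ℤ) (t : ℕ) (ht : t < F.card) :
    (F.filter (· < (F.sort (· ≤ ·))[t]'(by rw [Finset.length_sort]; exact ht))).card = t := by
  classical
  have hlt : (F.sort (· ≤ ·)).Pairwise (· < ·) := List.sortedLT_iff_pairwise.1 F.sortedLT_sort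
  have hlen : (F.sort (· ≤ ·)).length = F.card := Finset.length_sort _
  apply filter_card_of_sorted F _ t (by omega)
  intro i hi
  constructor
  · intro h
    by_contra hcon
    have : t ≤ i := by omega
    rcases Nat.eq_or_lt_of_le this with h' | h'
    · subst h'; exact absurd h (lt_irrefl _)
    · exact absurd (sorted_getElem_lt hlt (by omega) hi h') (not_lt.2 (le_of_lt h))
  · intro h
    exact sorted_getElem_lt hlt hi (by omega) h

lemma sort_le_of_filter_card (F : Finset ℤ) (x : ℤ) (t : ℕ) (ht : t < F.card)
    (h : t + 1 ≤ (F.filter (· ≤ x)).card) :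
    (F.sort (· ≤ ·))[t]'(by rw [Finset.length_sort]; exact ht) ≤ x := by
  classical
  by_contra hcon
  push_neg at hcon
  have hsub : F.filter (· ≤ x) ⊆ F.filter (· < (F.sort (· ≤ ·))[t]'(by rw [Finset.length_sort]; exact ht)) := by
    intro y hy
    rw [Finset.mem_filter] at hy ⊢
    exact ⟨hy.1, lt_of_le_of_lt hy.2 hcon⟩
  have := Finset.card_le_card hsub
  rw [sort_filter_lt_card F t ht] at this
  omega

def mkWord (L A : List ℤ) (i : ℕ) : ℤ :=
  if i % 2 = 1 ∧ i < 2 * L.length then L.getD (i / 2) 0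
  else if i < 2 * L.length then A.getD (i / 2) 0
  else A.getD (i - L.length) 0

lemma construct (L A : List ℤ) (hA : A.Pairwise (· < ·)) (hLnd : L.Nodup)
    (hdisj : ∀ x ∈ L, x ∉ A) (hlen : L.length + 1 ≤ A.length)
    (hgt : ∀ t (ht : t < L.length) (ht1 : t + 1 < A.length), A[t + 1] < L[t])
    (total : ℕ) (htot : total = A.length + L.length) :
    ∃ w : Fin total → ℤ, Function.Injective w ∧ (∀ i, w i ∈ A ∨ w i ∈ L) ∧
      PinSet total w = {x | x ∈ L} := by
  classical
  set d := L.length with hd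
  set a := A.length with ha
  have hmono : ∀ t (ht : t < d) s (hs : s ≤ t + 1), A[s]'(by omega) < L[t] := by
    intro t ht s hs
    have h1 : t + 1 < a := by omega
    rcases Nat.eq_or_lt_of_le hs with h | h
    · subst h; exact hgt t ht h1
    · exact lt_trans (sorted_getElem_lt hA (by omega) (by omega) (by omega)) (hgt t ht h1)
  have v1 : ∀ i (h1 : i % 2 = 1) (h2 : i < 2 * d), mkWord L A i = L[i / 2]'(by omega) := by
    intro i h1 h2
    rw [mkWord, if_pos ⟨h1, h2⟩]
    exact List.getD_eq_getElem L 0 (by omega)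
  have v2a : ∀ i (h1 : i % 2 = 0) (h2 : i < 2 * d), mkWord L A i = A[i / 2]'(by omega) := by
    intro i h1 h2
    rw [mkWord, if_neg (by omega), if_pos h2]
    exact List.getD_eq_getElem A 0 (by omega)
  have v2b : ∀ i (h1 : 2 * d ≤ i) (h2 : i < total), mkWord L A i = A[i - d]'(by omega) := by
    intro i h1 h2
    rw [mkWord, if_neg (by omega), if_neg (by omega)]
    exact List.getD_eq_getElem A 0 (by omega)
  -- uniform "non-designated" value lemma
  have v2 : ∀ i (h2 : i < total) (hni : ¬(i % 2 = 1 ∧ i < 2 * d)),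
      ∃ j, ∃ (hj : j < a), mkWord L A i = A[j] ∧
        (i < 2 * d → j = i / 2) ∧ (2 * d ≤ i → j = i - d) := by
    intro i h2 hni
    rcases Nat.lt_or_ge i (2 * d) with h | h
    · have h1 : i % 2 = 0 := by omega
      exact ⟨i / 2, by omega, v2a i h1 h, fun _ => rfl, fun hc => by omega⟩
    · exact ⟨i - d, by omega, v2b i h h2, fun hc => by omega, fun _ => rfl⟩
  refine ⟨fun i => mkWord L A i.val, ?_, ?_, ?_⟩
  · -- injective
    intro i j hij
    simp only at hij
    by_cases hi : i.val % 2 = 1 ∧ i.val < 2 * d <;>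
      by_cases hj : j.val % 2 = 1 ∧ j.val < 2 * d
    · rw [v1 _ hi.1 hi.2, v1 _ hj.1 hj.2] at hij
      have := (List.Nodup.getElem_inj_iff hLnd).1 hij
      have hi1 := hi.1; have hj1 := hj.1
      exact Fin.ext (by omega)
    · obtain ⟨jj, hjj, hv, -, -⟩ := v2 j.val j.isLt hj
      rw [v1 _ hi.1 hi.2, hv] at hij
      exfalso
      apply hdisj _ (List.getElem_mem _)
      rw [hij]
      exact List.getElem_mem _
    · obtain ⟨jj, hjj, hv, -, -⟩ := v2 i.val i.isLt hi
      rw [v1 _ hj.1 hj.2, hv] at hij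
      exfalso
      apply hdisj _ (List.getElem_mem _)
      rw [← hij]
      exact List.getElem_mem _
    · obtain ⟨ji, hji, hvi, hi1, hi2⟩ := v2 i.val i.isLt hi
      obtain ⟨jj, hjj, hvj, hj1, hj2⟩ := v2 j.val j.isLt hj
      rw [hvi, hvj] at hij
      have hjieq := (List.Nodup.getElem_inj_iff hA.nodup).1 hij
      apply Fin.ext
      rcases Nat.lt_or_ge i.val (2 * d) with h | h <;>
        rcases Nat.lt_or_ge j.val (2 * d) with h' | h'
      · have := hi1 h; have := hj1 h'
        have : i.val % 2 = 0 := by omega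
        have : j.val % 2 = 0 := by omega
        omega
      · have := hi1 h; have := hj2 h'; omega
      · have := hi2 h; have := hj1 h'; omega
      · have := hi2 h; have := hj2 h'; omega
  · -- membership
    intro i
    by_cases hi : i.val % 2 = 1 ∧ i.val < 2 * d
    · refine Or.inr ?_
      show mkWord L A i.val ∈ L
      rw [v1 _ hi.1 hi.2]; exact List.getElem_mem _
    · refine Or.inl ?_
      show mkWord L A i.val ∈ A
      obtain ⟨j, hj, hv, -, -⟩ := v2 i.val i.isLt hi
      rw [hv]; exact List.getElem_mem _
  · -- pinnacle set
    ext x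
    simp only [Set.mem_setOf_eq]
    rw [mem_pinset_iff]
    have hWe : ∀ i (h : i < total), Wext total (fun i : Fin total => mkWord L A i.val) i
        = mkWord L A i := fun i h => by rw [Wext_lt _ h]
    constructor
    · rintro ⟨i, h0, h2, hv, hl, hr⟩
      rw [hWe i (by omega)] at hv hl hr
      rw [hWe (i-1) (by omega)] at hl
      rw [hWe (i+1) (by omega)] at hr
      by_cases hcase : i % 2 = 1 ∧ i < 2 * d
      · rw [← hv, v1 _ hcase.1 hcase.2]; exact List.getElem_mem _
      · exfalso
        obtain ⟨j, hj, hvi, hj1, hj2⟩ := v2 i (by omega) hcase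
        rcases Nat.lt_or_ge i (2 * d) with h | h
        · -- i even, i < 2d; right neighbor is L[(i+1)/2]
          have hieven : i % 2 = 0 := by omega
          have hi1 : i + 1 < 2 * d := by omega
          have hrv : mkWord L A (i+1) = L[(i+1)/2]'(by omega) := v1 _ (by omega) hi1
          rw [hvi, hrv] at hr
          have hji : j = i / 2 := hj1 h
          subst hji
          have hlt2 : A[i/2]'(by omega) < L[(i+1)/2]'(by omega) :=
            hmono ((i+1)/2) (by omega) (i/2) (by omega)
          exact lt_asymm hr hlt2
        · -- i ≥ 2d; right neighbor is A[i+1-d]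
          have hrv : mkWord L A (i+1) = A[i+1-d]'(by omega) := v2b _ (by omega) (by omega)
          rw [hvi, hrv] at hr
          have hji : j = i - d := hj2 h
          subst hji
          have : A[i-d]'(by omega) < A[i+1-d]'(by omega) :=
            sorted_getElem_lt hA (by omega) (by omega) (by omega)
          exact lt_asymm hr this
    · intro hx
      rw [List.mem_iff_getElem] at hx
      obtain ⟨t, ht, hxv⟩ := hx
      have w_odd : mkWord L A (2*t+1) = L[t] := by
        rw [v1 (2*t+1) (by omega) (by omega)]
        simp only [show (2*t+1)/2 = t from by omega]
      have w_even : ∀ s (hs : s ≤ d) (h2 : 2*s < total), mkWord L A (2*s) = A[s]'(by omega) := by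
        intro s hs h2
        rcases Nat.lt_or_ge s d with h | h
        · rw [v2a (2*s) (by omega) (by omega)]
          simp only [show (2*s)/2 = s from by omega]
        · rw [v2b (2*s) (by omega) h2]
          simp only [show 2*s - d = s from by omega]
      refine ⟨2*t+1, by omega, by omega, ?_, ?_, ?_⟩
      · rw [hWe _ (by omega), w_odd]; exact hxv
      · rw [hWe _ (by omega), hWe _ (by omega)]
        rw [show (2*t+1) - 1 = 2*t from by omega, w_even t (by omega) (by omega), w_odd]
        exact hmono t (by omega) t (by omega)
      · rw [hWe _ (by omega), hWe _ (by omega)]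
        rw [show (2*t+1) + 1 = 2*(t+1) from by omega, w_even (t+1) (by omega) (by omega), w_odd]
        exact hmono t (by omega) (t+1) (by omega)

open Finset in
lemma key_len (X N : Finset ℤ) (hNX : N ⊆ X)
    (hcrit : ∀ x ∈ N, 2 * (N.filter (· ≤ x)).card < (X.filter (· ≤ x)).card)
    (hXpos : 0 < X.card) : N.card + 1 ≤ (X \ N).card := by
  classical
  have hsd : (X \ N).card = X.card - N.card := Finset.card_sdiff_of_subset hNX
  have hle : N.card ≤ X.card := Finset.card_le_card hNX
  rcases Finset.eq_empty_or_nonempty N with h | h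
  · have h0 : N.card = 0 := by rw [h]; rfl
    omega
  · set x := N.max' h with hx
    have hxN : x ∈ N := N.max'_mem h
    have h1 : N.filter (· ≤ x) = N := Finset.filter_true_of_mem (fun y hy => N.le_max' y hy)
    have h2 := hcrit x hxN
    rw [h1] at h2
    have h3 : (X.filter (· ≤ x)).card ≤ X.card := Finset.card_filter_le _ _
    omega

open Finset in
lemma key_gap (X N : Finset ℤ) (hNX : N ⊆ X)
    (hcrit : ∀ x ∈ N, 2 * (N.filter (· ≤ x)).card < (X.filter (· ≤ x)).card)
    (t : ℕ) (ht : t < N.card) (ht1 : t + 1 < ((X \ N).sort (· ≤ ·)).length) :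
    ((X \ N).sort (· ≤ ·))[t+1] <
      (N.sort (· ≤ ·))[t]'(by rw [Finset.length_sort]; exact ht) := by
  classical
  set x := (N.sort (· ≤ ·))[t]'(by rw [Finset.length_sort]; exact ht) with hxdef
  have hxN : x ∈ N := (Finset.mem_sort _).1 (List.getElem_mem _)
  have hNf : (N.filter (· ≤ x)).card = t + 1 := sort_filter_le_card N t ht
  have hXf := hcrit x hxN
  rw [hNf] at hXf
  have hsub : N.filter (· ≤ x) ⊆ X.filter (· ≤ x) :=
    Finset.filter_subset_filter _ hNX
  have hsdf : (X \ N).filter (· ≤ x) = X.filter (· ≤ x) \ N.filter (· ≤ x) := by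
    ext y
    simp only [Finset.mem_filter, Finset.mem_sdiff]
    tauto
  have hcard : t + 2 ≤ ((X \ N).filter (· ≤ x)).card := by
    rw [hsdf, Finset.card_sdiff_of_subset hsub, hNf]
    omega
  have hb : t + 1 < (X \ N).card := by
    have := Finset.card_filter_le (X \ N) (· ≤ x)
    omega
  have hle : ((X \ N).sort (· ≤ ·))[t+1]'(by rw [Finset.length_sort]; exact hb) ≤ x :=
    sort_le_of_filter_card (X \ N) x (t+1) hb hcard
  have hne : ((X \ N).sort (· ≤ ·))[t+1] ≠ x := by
    intro hcon
    have hmem : ((X \ N).sort (· ≤ ·))[t+1] ∈ X \ N := (Finset.mem_sort _).1 (List.getElem_mem _)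
    rw [hcon] at hmem
    exact (Finset.mem_sdiff.1 hmem).2 hxN
  exact lt_of_le_of_ne hle hne

lemma pinset_zero (w : Fin 0 → ℤ) : PinSet 0 w = (∅ : Set ℤ) := by
  ext x
  constructor
  · rintro ⟨i, h0, h2, -⟩; omega
  · intro h; exact absurd h (Set.notMem_empty x)

lemma apson_of_crit (X N : Finset ℤ) (hNX : N ⊆ X)
    (hcrit : ∀ x ∈ N, 2 * (N.filter (· ≤ x)).card < (X.filter (· ≤ x)).card) :
    APSOn X N := by
  classical
  rcases Nat.eq_zero_or_pos X.card with h0 | h0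
  · have hXe : X = ∅ := Finset.card_eq_zero.1 h0
    have hNe : N = ∅ := Finset.subset_empty.1 (hXe ▸ hNX)
    rw [APSOn, h0]
    refine ⟨fun _ => 0, fun i j _ => absurd i.isLt (by omega), fun i => absurd i.isLt (by omega), ?_⟩
    rw [pinset_zero, hNe]
    simp
  · have hlen := key_len X N hNX hcrit h0
    have hsd : (X \ N).card = X.card - N.card := Finset.card_sdiff_of_subset hNX
    have hle : N.card ≤ X.card := Finset.card_le_card hNX
    obtain ⟨w, hinj, hmem, hpin⟩ :=
      construct (N.sort (· ≤ ·)) ((X \ N).sort (· ≤ ·))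
        (List.sortedLT_iff_pairwise.1 (X \ N).sortedLT_sort) (N.sort_nodup _)
        (by
          intro x hx hx2
          have h1 : x ∈ N := (Finset.mem_sort _).1 hx
          have h2 : x ∈ X \ N := (Finset.mem_sort _).1 hx2
          exact (Finset.mem_sdiff.1 h2).2 h1)
        (by rw [Finset.length_sort, Finset.length_sort]; omega)
        (by
          intro t ht ht1
          rw [Finset.length_sort] at ht
          exact key_gap X N hNX hcrit t ht ht1)
        X.card
        (by rw [Finset.length_sort, Finset.length_sort]; omega)
    refine ⟨w, hinj, ?_, ?_⟩
    · intro i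
      rcases hmem i with h | h
      · exact Finset.sdiff_subset ((Finset.mem_sort _).1 h)
      · exact hNX ((Finset.mem_sort _).1 h)
    · rw [hpin]
      ext z
      simp only [Set.mem_setOf_eq, Finset.mem_coe]
      exact Finset.mem_sort _

end Stmt4Aux

open Stmt4Aux in
theorem stmt4 (n : ℕ) (S : Finset ℤ) (hS : ∀ x ∈ S, -x ∉ S) :
    APSB n S ↔
      ((S.filter fun x => 0 < x).card + (S.filter fun x => x < 0).card ≤ (n - 1) / 2 ∧
       (S.filter fun x => 0 < x) ⊆ Finset.Icc 1 (n : ℤ) ∧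
       (S.filter fun x => x < 0) ⊆
         ((Finset.Icc 1 (n : ℤ)) \ (S.filter fun x => 0 < x)).image Neg.neg ∧
       APSOn (((Finset.Icc 1 (n : ℤ)) \ (S.filter fun x => 0 < x)).image Neg.neg)
         (S.filter fun x => x < 0)) := by
  classical
  set P := S.filter (fun x => 0 < x) with hP
  set N := S.filter (fun x => x < 0) with hN
  set X := ((Finset.Icc 1 (n : ℤ)) \ P).image Neg.neg with hX
  have hS0 : (0 : ℤ) ∉ S := fun h => hS 0 h (by simpa using h)
  have hSsplit : ∀ x ∈ S, 0 < x ∨ x < 0 := by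
    intro x hx
    rcases lt_trichotomy x 0 with h | h | h
    · exact Or.inr h
    · exact absurd (h ▸ hx) hS0
    · exact Or.inl h
  have hun : P ∪ N = S := by
    ext x
    rw [Finset.mem_union, Finset.mem_filter, Finset.mem_filter]
    constructor
    · rintro (⟨h, -⟩ | ⟨h, -⟩) <;> exact h
    · intro h
      rcases hSsplit x h with h' | h'
      · exact Or.inl ⟨h, h'⟩
      · exact Or.inr ⟨h, h'⟩
  have hdisjPN : Disjoint P N := by
    rw [Finset.disjoint_left]
    intro x hx hx'
    have ha := (Finset.mem_filter.1 hx).2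
    have hb := (Finset.mem_filter.1 hx').2
    omega
  have hcardS : S.card = P.card + N.card := by
    rw [← hun, Finset.card_union_of_disjoint hdisjPN]
  have hXmem : ∀ z, z ∈ X ↔ (1 ≤ -z ∧ -z ≤ (n : ℤ) ∧ -z ∉ P) := by
    intro z
    rw [hX]
    simp only [Finset.mem_image, Finset.mem_sdiff, Finset.mem_Icc]
    constructor
    · rintro ⟨y, ⟨⟨hy1, hy2⟩, hyP⟩, rfl⟩
      constructor
      · omega
      · constructor
        · omega
        · simpa using hyP
    · rintro ⟨h1, h2, h3⟩
      exact ⟨-z, ⟨⟨h1, h2⟩, h3⟩, neg_neg z⟩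
  have hXneg : ∀ z ∈ X, z < 0 := by
    intro z hz
    have := (hXmem z).1 hz
    omega
  constructor
  · rintro ⟨w, ⟨hbnd, habs⟩, hpin⟩
    have hw : Function.Injective w := fun i j h => habs (show |w i| = |w j| by rw [h])
    have hval : ∀ x ∈ S, ∃ i : Fin n, w i = x := by
      intro x hx
      have hx' : x ∈ PinSet n w := by rw [hpin]; exact hx
      obtain ⟨i, h0, h2, hv, -, -⟩ := hx'
      exact ⟨⟨i, by omega⟩, hv⟩
    have hXof : ∀ i : Fin n, w i < 0 → w i ∈ X := by
      intro i hneg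
      rw [hXmem]
      have hb := hbnd i
      have habsv : |w i| = -(w i) := abs_of_neg hneg
      refine ⟨by omega, by omega, ?_⟩
      intro hmem
      have hmS : -(w i) ∈ S := Finset.mem_filter.1 hmem |>.1
      obtain ⟨j, hj⟩ := hval _ hmS
      have heq2 : |w j| = |w i| := by rw [hj, abs_neg]
      have hji : j = i := habs heq2
      rw [hji] at hj
      omega
    have c3 : N ⊆ X := by
      intro x hx
      obtain ⟨hxS, hx0⟩ := Finset.mem_filter.1 hx
      obtain ⟨i, hi⟩ := hval x hxS
      have := hXof i (by rw [hi]; exact hx0)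
      rwa [hi] at this
    refine ⟨?_, ?_, c3, ?_⟩
    · have := card_pin_le n w hw S hpin
      omega
    · intro x hx
      obtain ⟨hxS, hx0⟩ := Finset.mem_filter.1 hx
      obtain ⟨i, hi⟩ := hval x hxS
      have hb := hbnd i
      rw [hi, abs_of_pos hx0] at hb
      exact Finset.mem_Icc.2 ⟨by omega, by omega⟩
    · have hcrit : ∀ x ∈ N, 2 * (N.filter (· ≤ x)).card < (X.filter (· ≤ x)).card := by
        intro x hx
        obtain ⟨hxS, hx0⟩ := Finset.mem_filter.1 hx
        have heq : N.filter (· ≤ x) = S.filter (· ≤ x) := by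
          rw [hN, Finset.filter_filter]
          apply Finset.filter_congr
          intro y hy
          constructor
          · rintro ⟨-, h⟩; exact h
          · intro h; exact ⟨by omega, h⟩
        have hcl := count_lemma n w hw S X hpin x (fun i hi => hXof i (by omega)) hxS
        rw [← heq] at hcl
        exact hcl
      exact apson_of_crit X N c3 hcrit
  · rintro ⟨h1, h2, h3, h4⟩
    rcases Nat.eq_zero_or_pos n with hn0 | hn
    · subst hn0
      have hP0 : P.card = 0 := by omega
      have hN0 : N.card = 0 := by omega
      have hPe : P = ∅ := Finset.card_eq_zero.1 hP0
      have hNe : N = ∅ := Finset.card_eq_zero.1 hN0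
      have hSe : S = ∅ := by
        rw [Finset.eq_empty_iff_forall_notMem]
        intro x hx
        rcases hSsplit x hx with h | h
        · have : x ∈ P := Finset.mem_filter.2 ⟨hx, h⟩
          rw [hPe] at this
          exact absurd this (Finset.notMem_empty x)
        · have : x ∈ N := Finset.mem_filter.2 ⟨hx, h⟩
          rw [hNe] at this
          exact absurd this (Finset.notMem_empty x)
      refine ⟨fun _ => 0,
        ⟨fun i => absurd i.isLt (by omega), fun i j _ => absurd i.isLt (by omega)⟩, ?_⟩
      rw [pinset_zero, hSe]
      simp
    · obtain ⟨u, huinj, humem, hupin⟩ := h4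
      have hIcc : (Finset.Icc (1 : ℤ) (n : ℤ)).card = n := by
        rw [Int.card_Icc]
        omega
      have hXcard : X.card = n - P.card := by
        rw [hX, Finset.card_image_of_injective _ neg_injective, Finset.card_sdiff_of_subset h2, hIcc]
      have hNX : N ⊆ X := h3
      have hcrit : ∀ x ∈ N, 2 * (N.filter (· ≤ x)).card < (X.filter (· ≤ x)).card :=
        fun x hx => count_lemma X.card u huinj N X hupin x (fun i _ => humem i) hx
      have hkd : 2 * (P.card + N.card) ≤ n - 1 := by omega
      have hdX : N.card ≤ X.card := Finset.card_le_card hNX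
      have hsd : (X \ N).card = X.card - N.card := Finset.card_sdiff_of_subset hNX
      obtain ⟨w, hinj, hmem, hpin⟩ :=
        construct (N.sort (· ≤ ·) ++ P.sort (· ≤ ·)) ((X \ N).sort (· ≤ ·))
          (List.sortedLT_iff_pairwise.1 (X \ N).sortedLT_sort)
          (by
            apply List.Nodup.append (N.sort_nodup _) (P.sort_nodup _)
            intro z hzN hzP
            have h5 : z < 0 := (Finset.mem_filter.1 ((Finset.mem_sort _).1 hzN)).2
            have h6 : 0 < z := (Finset.mem_filter.1 ((Finset.mem_sort _).1 hzP)).2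
            omega)
          (by
            intro z hzL hzA
            have hzX : z ∈ X \ N := (Finset.mem_sort _).1 hzA
            rcases List.mem_append.1 hzL with h | h
            · exact (Finset.mem_sdiff.1 hzX).2 ((Finset.mem_sort _).1 h)
            · have h5 : 0 < z := (Finset.mem_filter.1 ((Finset.mem_sort _).1 h)).2
              have h6 := hXneg z (Finset.sdiff_subset hzX)
              omega)
          (by
            rw [List.length_append, Finset.length_sort, Finset.length_sort, Finset.length_sort]
            omega)
          (by
            intro t ht ht1
            rw [List.length_append, Finset.length_sort, Finset.length_sort] at ht
            rcases Nat.lt_or_ge t N.card with h | h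
            · rw [List.getElem_append_left (by rw [Finset.length_sort]; exact h)]
              exact key_gap X N hNX hcrit t h ht1
            · rw [List.getElem_append_right (by rw [Finset.length_sort]; exact h)]
              have h5 : 0 < (P.sort (· ≤ ·))[t - (N.sort (· ≤ ·)).length]'(by
                  simp only [Finset.length_sort] at *; omega) :=
                (Finset.mem_filter.1 ((Finset.mem_sort _).1 (List.getElem_mem _))).2
              have h6 : ((X \ N).sort (· ≤ ·))[t+1] < 0 :=
                hXneg _ (Finset.sdiff_subset ((Finset.mem_sort _).1 (List.getElem_mem _)))
              omega)
          n
          (by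
            rw [List.length_append, Finset.length_sort, Finset.length_sort, Finset.length_sort]
            omega)
      have hmem' : ∀ i, w i ∈ X ∨ w i ∈ P := by
        intro i
        rcases hmem i with h | h
        · exact Or.inl (Finset.sdiff_subset ((Finset.mem_sort _).1 h))
        · rcases List.mem_append.1 h with h | h
          · exact Or.inl (hNX ((Finset.mem_sort _).1 h))
          · exact Or.inr ((Finset.mem_sort _).1 h)
      refine ⟨w, ⟨?_, ?_⟩, ?_⟩
      · intro i
        rcases hmem' i with h | h
        · obtain ⟨hb1, hb2, -⟩ := (hXmem _).1 h
          have habsv : |w i| = -(w i) := abs_of_neg (hXneg _ h)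
          constructor <;> omega
        · have hb := Finset.mem_Icc.1 (h2 h)
          have h0 : 0 < w i := (Finset.mem_filter.1 h).2
          have habsv : |w i| = w i := abs_of_pos h0
          constructor <;> omega
      · intro i j hij
        have hij' : |w i| = |w j| := hij
        rcases abs_eq_abs.1 hij' with h | h
        · exact hinj h
        · exfalso
          rcases hmem' i with hi | hi <;> rcases hmem' j with hj | hj
          · have := hXneg _ hi
            have := hXneg _ hj
            omega
          · have h3' := ((hXmem _).1 hi).2.2
            apply h3'
            have : -(w i) = w j := by rw [h, neg_neg]
            rw [this]
            exact hj
          · have h3' := ((hXmem _).1 hj).2.2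
            apply h3'
            have : -(w j) = w i := by rw [h]
            rw [this]
            exact hi
          · have hpi : 0 < w i := (Finset.mem_filter.1 hi).2
            have hpj : 0 < w j := (Finset.mem_filter.1 hj).2
            omega
      · rw [hpin]
        ext z
        simp only [Set.mem_setOf_eq, Finset.mem_coe, List.mem_append]
        constructor
        · rintro (h | h)
          · exact Finset.filter_subset _ _ ((Finset.mem_sort _).1 h)
          · exact Finset.filter_subset _ _ ((Finset.mem_sort _).1 h)
        · intro hzS
          rcases hSsplit z hzS with h | h
          · exact Or.inr ((Finset.mem_sort _).2 (Finset.mem_filter.2 ⟨hzS, h⟩))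
          · exact Or.inl ((Finset.mem_sort _).2 (Finset.mem_filter.2 ⟨hzS, h⟩))
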